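/- For integers k ≥ r ≥ 3, C(k,r) − Σ_{i=1}^∞ C(k/2^i, r) ≤ (k^r/r!)·(1 − 1/(2^r − 1)), where C(x,r) denotes the extended binomial coefficient (equal to x(x−1)···(x−r+1)/r! for x ≥ r−1 and 0 for x < r−1). Note the sum is finite since C(k/2^i, r) = 0 once k/2^i < r−1. -/

import Mathlib

/-- The extended binomial coefficient: `x(x-1)⋯(x-r+1)/r!` when `x ≥ r-1`, and `0` otherwise. -/
noncomputable def extBinom (x : ℝ) (r : ℕ) : ℝ :=
  if (r : ℝ) - 1 ≤ x then (∏ j ∈ Finset.range r, (x - (j : ℝ))) / (Nat.factorial r) else 0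

open Finset

lemma extBinom_of_lt {x : ℝ} {r : ℕ} (h : x < (r:ℝ) - 1) : extBinom x r = 0 := by
  rw [extBinom, if_neg (not_le.mpr h)]

lemma extBinom_of_le {x : ℝ} {r : ℕ} (h : (r:ℝ) - 1 ≤ x) :
    extBinom x r = (∏ j ∈ Finset.range r, (x - (j : ℝ))) / (Nat.factorial r) := by
  rw [extBinom, if_pos h]

lemma nat_two_pow (n : ℕ) (hn : 2 ≤ n) : n + 2 ≤ 2 ^ n := by
  induction n with
  | zero => omega
  | succ n ih =>
    rcases Nat.lt_or_ge n 2 with h | h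
    · have hn1 : n = 1 := by omega
      subst hn1; norm_num
    · have := ih h
      rw [pow_succ]; omega

lemma weier (n : ℕ) : ∀ x : ℝ, (n : ℝ) ≤ x →
    x ^ (n+1) - (∑ j ∈ range (n+1), (j:ℝ)) * x ^ n ≤ ∏ j ∈ range (n+1), (x - (j:ℝ)) := by
  induction n with
  | zero => intro x hx; simp
  | succ n ih =>
    intro x hx
    have hx0 : (0:ℝ) ≤ x := le_trans (by positivity) hx
    have hxn : (n:ℝ) ≤ x := by push_cast at hx ⊢; linarith
    have hS0 : (0:ℝ) ≤ ∑ j ∈ range (n+1), (j:ℝ) :=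
      Finset.sum_nonneg fun j _ => by positivity
    have hP0 : (0:ℝ) ≤ ∏ j ∈ range (n+1), (x - (j:ℝ)) := by
      apply Finset.prod_nonneg
      intro j hj
      have hj' : j ≤ n := by simpa [Nat.lt_succ_iff] using hj
      have : (j:ℝ) ≤ n := by exact_mod_cast hj'
      linarith
    have h2 := ih x hxn
    rw [Finset.prod_range_succ, Finset.sum_range_succ]
    push_cast at hx ⊢
    have e2 : x^(n+1) = x^n * x := by ring
    rw [e2] at h2 ⊢
    have e1 : x^(n+1+1) = x^n * x * x := by ring
    rw [e1]
    set S := ∑ j ∈ range (n+1), (j:ℝ) with hSdef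
    set P := ∏ j ∈ range (n+1), (x - (j:ℝ)) with hPdef
    have hxr : (0:ℝ) ≤ x - (n+1) := by linarith
    by_cases hc : x ≤ S + (n+1)
    · nlinarith [mul_nonneg hP0 hxr,
        mul_nonneg (mul_nonneg (pow_nonneg hx0 n) hx0) (sub_nonneg.mpr hc)]
    · push_neg at hc
      have h2' := mul_le_mul_of_nonneg_right h2 hxr
      nlinarith [h2', mul_nonneg hS0 (pow_nonneg hx0 n)]

lemma geom_tail (t : ℝ) (ht : 1 < t) : ∀ m : ℕ,
    ∑ i ∈ range m, (1/t) ^ (i+1) = (1 - (1/t)^m) / (t - 1) := by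
  have ht0 : t ≠ 0 := by linarith
  have ht1 : t - 1 ≠ 0 := sub_ne_zero.mpr (ne_of_gt ht)
  intro m
  induction m with
  | zero => simp
  | succ m ih =>
    rw [Finset.sum_range_succ, ih]
    field_simp
    ring_nf
    rw [mul_inv_cancel₀ ht0]
    ring

set_option maxHeartbeats 1000000 in
theorem sum_halving_bound (k r : ℕ) (hr : 3 ≤ r) (hk : r ≤ k) :
    extBinom (k : ℝ) r - ∑' i : ℕ, extBinom ((k : ℝ) / 2 ^ (i + 1)) r
      ≤ (k : ℝ) ^ r / (Nat.factorial r) * (1 - 1 / (2 ^ r - 1)) := by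
  obtain ⟨n, rfl⟩ : ∃ n, r = n + 1 := ⟨r - 1, by omega⟩
  have hn : 2 ≤ n := by omega
  set K : ℝ := (k:ℝ) with hKdef
  have hKn : (n:ℝ) + 1 ≤ K := by rw [hKdef]; exact_mod_cast hk
  have hn0 : (0:ℝ) ≤ (n:ℝ) := by positivity
  have hK0 : (0:ℝ) < K := by linarith
  have hfac : (0:ℝ) < (Nat.factorial (n+1) : ℝ) := by positivity
  -- the cutoff index m
  have hex : ∃ i, k < n * 2 ^ (i + 1) := by
    refine ⟨k, ?_⟩
    have h1 : k < 2 ^ k := Nat.lt_two_pow_self (n := k)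
    have h2 : (2:ℕ) ^ k ≤ 2 ^ (k+1) := Nat.pow_le_pow_right (by norm_num) (by omega)
    have h3 : (2:ℕ) ^ (k+1) ≤ n * 2 ^ (k+1) := Nat.le_mul_of_pos_left _ (by omega)
    omega
  set m := Nat.find hex with hmdef
  have hmk : k < n * 2 ^ (m + 1) := Nat.find_spec hex
  have hlow : ∀ i < m, n * 2 ^ (i + 1) ≤ k := fun i hi => le_of_not_gt (Nat.find_min hex hi)
  have hKm : K < (n:ℝ) * 2 ^ (m+1) := by rw [hKdef]; exact_mod_cast hmk
  -- vanishing terms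
  have hzero : ∀ i ∉ range m, extBinom (K / 2 ^ (i+1)) (n+1) = 0 := by
    intro i hi
    have him : m ≤ i := by simpa using hi
    have hpow : ((2:ℝ)) ^ (m+1) ≤ (2:ℝ) ^ (i+1) :=
      pow_le_pow_right₀ (by norm_num) (by omega)
    have hxlt : K / 2 ^ (i+1) < (n:ℝ) := by
      rw [div_lt_iff₀ (by positivity)]
      calc K < (n:ℝ) * 2 ^ (m+1) := hKm
        _ ≤ (n:ℝ) * 2 ^ (i+1) := by nlinarith
    apply extBinom_of_lt
    push_cast
    linarith
  have htsum : ∑' i : ℕ, extBinom (K / 2 ^ (i+1)) (n+1)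
      = ∑ i ∈ range m, extBinom (K / 2 ^ (i+1)) (n+1) := tsum_eq_sum hzero
  -- abbreviations
  set c : ℝ := ∑ j ∈ range (n+1), (j:ℝ) with hcdef
  have hc0 : (0:ℝ) ≤ c := Finset.sum_nonneg fun j _ => by positivity
  have hc2 : c * 2 = ((n:ℝ)+1) * n := by
    have h := Finset.sum_range_id_mul_two (n+1)
    simp only [Nat.add_sub_cancel] at h
    have hcast : ((∑ i ∈ range (n+1), i : ℕ) : ℝ) = c := by rw [hcdef]; push_cast; rfl
    calc c * 2 = ((∑ i ∈ range (n+1), i : ℕ) : ℝ) * 2 := by rw [hcast]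
      _ = (((n+1) * n : ℕ) : ℝ) := by exact_mod_cast h
      _ = ((n:ℝ)+1) * n := by push_cast; ring
  set u : ℝ := 1/(2:ℝ)^(n+1) with hudef
  set v : ℝ := 1/(2:ℝ)^n with hvdef
  have hT1 : (1:ℝ) < (2:ℝ)^(n+1) := one_lt_pow₀ (by norm_num) (by omega)
  have hS1 : (1:ℝ) < (2:ℝ)^n := one_lt_pow₀ (by norm_num) (by omega)
  have hT7 : (7:ℝ) ≤ (2:ℝ)^(n+1) - 1 := by
    have : (2:ℝ)^3 ≤ (2:ℝ)^(n+1) := pow_le_pow_right₀ (by norm_num) (by omega)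
    norm_num at this ⊢; linarith
  have hS3 : (3:ℝ) ≤ (2:ℝ)^n - 1 := by
    have : (2:ℝ)^2 ≤ (2:ℝ)^n := pow_le_pow_right₀ (by norm_num) (by omega)
    norm_num at this ⊢; linarith
  have hu0 : (0:ℝ) ≤ u := by positivity
  have hv0 : (0:ℝ) ≤ v := by positivity
  have hum0 : (0:ℝ) ≤ u^m := pow_nonneg hu0 m
  have hvm0 : (0:ℝ) ≤ v^m := pow_nonneg hv0 m
  -- per-term lower bound
  have hterm : ∀ i ∈ range m,
      (K^(n+1) * u^(i+1) - c * (K^n * v^(i+1))) / (Nat.factorial (n+1))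
        ≤ extBinom (K / 2^(i+1)) (n+1) := by
    intro i hi
    have hi' : i < m := mem_range.mp hi
    have hlo : (n:ℝ) * 2^(i+1) ≤ K := by rw [hKdef]; exact_mod_cast hlow i hi'
    have h2p : (0:ℝ) < (2:ℝ)^(i+1) := by positivity
    have hxge : (n:ℝ) ≤ K / 2^(i+1) := by rw [le_div_iff₀ h2p]; linarith
    rw [extBinom_of_le (by push_cast; linarith)]
    have hw := weier n (K / 2^(i+1)) hxge
    have e1 : (K / 2^(i+1))^(n+1) = K^(n+1) * u^(i+1) := by
      rw [hudef, div_pow, one_div, inv_pow, ← pow_mul, ← pow_mul, Nat.mul_comm,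
        div_eq_mul_inv]
    have e2 : (K / 2^(i+1))^n = K^n * v^(i+1) := by
      rw [hvdef, div_pow, one_div, inv_pow, ← pow_mul, ← pow_mul, Nat.mul_comm,
        div_eq_mul_inv]
    rw [e1, e2] at hw
    exact (div_le_div_iff_of_pos_right hfac).mpr (by linarith)
  -- geometric sums
  have hgeomu : ∑ i ∈ range m, u^(i+1) = (1 - u^m)/((2:ℝ)^(n+1) - 1) := by
    rw [hudef]; exact geom_tail ((2:ℝ)^(n+1)) hT1 m
  have hgeomv : ∑ i ∈ range m, v^(i+1) = (1 - v^m)/((2:ℝ)^n - 1) := by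
    rw [hvdef]; exact geom_tail ((2:ℝ)^n) hS1 m
  -- sum lower bound
  have hsum_lb : (K^(n+1) * ((1 - u^m)/((2:ℝ)^(n+1) - 1))
        - c * (K^n * ((1 - v^m)/((2:ℝ)^n - 1)))) / (Nat.factorial (n+1))
      ≤ ∑ i ∈ range m, extBinom (K / 2^(i+1)) (n+1) := by
    rw [← hgeomu, ← hgeomv]
    simp only [Finset.mul_sum]
    rw [← Finset.sum_sub_distrib, Finset.sum_div]
    exact Finset.sum_le_sum hterm
  -- upper bound on extBinom K (n+1)
  have hub : extBinom K (n+1) ≤ K^n * (K - n) / (Nat.factorial (n+1)) := by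
    rw [extBinom_of_le (by push_cast; linarith)]
    apply (div_le_div_iff_of_pos_right hfac).mpr
    rw [Finset.prod_range_succ]
    have h1 : ∏ j ∈ range n, (K - (j:ℝ)) ≤ K^n := by
      calc ∏ j ∈ range n, (K - (j:ℝ)) ≤ ∏ j ∈ range n, K := by
            apply Finset.prod_le_prod
            · intro j hj
              have : (j:ℝ) ≤ n := by exact_mod_cast le_of_lt (mem_range.mp hj)
              linarith
            · intro j hj
              have : (0:ℝ) ≤ (j:ℝ) := by positivity
              linarith
        _ = K^n := by rw [Finset.prod_const, Finset.card_range]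
    have h2 : (0:ℝ) ≤ K - n := by linarith
    exact mul_le_mul_of_nonneg_right h1 h2
  -- key numeric bound
  have hKum : K * u^m ≤ 2 * n := by
    have h1 : K * u^m ≤ ((n:ℝ) * 2^(m+1)) * u^m :=
      mul_le_mul_of_nonneg_right hKm.le hum0
    have e : u^m = 1/(2:ℝ)^((n+1)*m) := by
      rw [hudef, div_pow, one_pow, ← pow_mul]
    have hle : (2:ℝ)^(m+1) ≤ 2 * (2:ℝ)^((n+1)*m) := by
      have hm1 : m + 1 ≤ (n+1)*m + 1 := by
        have := Nat.le_mul_of_pos_left m (show 0 < n+1 by omega); omega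
      calc (2:ℝ)^(m+1) ≤ (2:ℝ)^((n+1)*m+1) :=
            pow_le_pow_right₀ (by norm_num) hm1
        _ = 2 * (2:ℝ)^((n+1)*m) := by rw [pow_succ]; ring
    have h2pos : (0:ℝ) < (2:ℝ)^((n+1)*m) := by positivity
    have h2 : ((n:ℝ) * 2^(m+1)) * u^m ≤ 2 * n := by
      rw [e, mul_one_div, div_le_iff₀ h2pos]
      nlinarith
    linarith
  have hstar : c/((2:ℝ)^n - 1) + K * u^m/((2:ℝ)^(n+1) - 1) ≤ (n:ℝ) := by
    have hb1 : c/((2:ℝ)^n - 1) ≤ n/2 := by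
      rw [div_le_div_iff₀ (by linarith) (by norm_num)]
      have hnp : ((n:ℝ) + 2) ≤ (2:ℝ)^n := by exact_mod_cast nat_two_pow n hn
      nlinarith
    have hb2 : K * u^m/((2:ℝ)^(n+1) - 1) ≤ 2*n/7 := by
      rw [div_le_div_iff₀ (by linarith) (by norm_num)]
      nlinarith [hKum, hT7, hn0, mul_nonneg hK0.le hum0]
    linarith
  have hstar' : c*K^n/((2:ℝ)^n - 1) + K^(n+1) * u^m/((2:ℝ)^(n+1) - 1) ≤ (n:ℝ)*K^n := by
    have h := mul_le_mul_of_nonneg_left hstar (pow_nonneg hK0.le n)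
    have e : K^n * (c/((2:ℝ)^n - 1) + K * u^m/((2:ℝ)^(n+1) - 1))
        = c*K^n/((2:ℝ)^n - 1) + K^(n+1) * u^m/((2:ℝ)^(n+1) - 1) := by ring
    rw [e] at h
    linarith
  have hB : c * (K^n * ((1 - v^m)/((2:ℝ)^n - 1))) ≤ c*K^n/((2:ℝ)^n - 1) := by
    have e : c * (K^n * ((1 - v^m)/((2:ℝ)^n - 1))) = c*K^n*(1-v^m)/((2:ℝ)^n - 1) := by
      ring
    rw [e]
    apply (div_le_div_iff_of_pos_right (show (0:ℝ) < (2:ℝ)^n - 1 by linarith)).mpr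
    nlinarith [mul_nonneg hc0 (pow_nonneg hK0.le n)]
  have hfinal : K^n*(K - n) - (K^(n+1) * ((1 - u^m)/((2:ℝ)^(n+1) - 1))
        - c * (K^n * ((1 - v^m)/((2:ℝ)^n - 1))))
      ≤ K^(n+1) * (1 - 1/((2:ℝ)^(n+1) - 1)) := by
    have e1 : K^(n+1) * ((1 - u^m)/((2:ℝ)^(n+1) - 1))
        = K^(n+1)/((2:ℝ)^(n+1) - 1) - K^(n+1)*u^m/((2:ℝ)^(n+1) - 1) := by ring
    have e2 : K^(n+1) * (1 - 1/((2:ℝ)^(n+1) - 1))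
        = K^(n+1) - K^(n+1)/((2:ℝ)^(n+1) - 1) := by ring
    have e3 : K^(n+1) = K^n * K := by ring
    rw [e1, e2]
    nlinarith [hstar', hB]
  -- put it together
  rw [htsum]
  calc extBinom K (n+1) - ∑ i ∈ range m, extBinom (K / 2^(i+1)) (n+1)
      ≤ K^n*(K - n)/(Nat.factorial (n+1))
        - (K^(n+1) * ((1 - u^m)/((2:ℝ)^(n+1) - 1))
           - c * (K^n * ((1 - v^m)/((2:ℝ)^n - 1))))/(Nat.factorial (n+1)) :=
        sub_le_sub hub hsum_lb
    _ ≤ K^(n+1)/(Nat.factorial (n+1)) * (1 - 1/((2:ℝ)^(n+1) - 1)) := by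
        have e : K^n*(K - n)/(Nat.factorial (n+1))
              - (K^(n+1) * ((1 - u^m)/((2:ℝ)^(n+1) - 1))
                 - c * (K^n * ((1 - v^m)/((2:ℝ)^n - 1))))/(Nat.factorial (n+1))
            = (K^n*(K - n) - (K^(n+1) * ((1 - u^m)/((2:ℝ)^(n+1) - 1))
                 - c * (K^n * ((1 - v^m)/((2:ℝ)^n - 1))))) / (Nat.factorial (n+1)) := by
          ring
        have e' : K^(n+1)/(Nat.factorial (n+1)) * (1 - 1/((2:ℝ)^(n+1) - 1))
            = (K^(n+1) * (1 - 1/((2:ℝ)^(n+1) - 1))) / (Nat.factorial (n+1)) := by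
          ring
        rw [e, e']
        exact (div_le_div_iff_of_pos_right hfac).mpr hfinal
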